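/- Let q be a prime power, n ≥ 1, F = 𝔽_{q^n}, m a positive integer with gcd(m,n) = 1 and σ : x ↦ x^{q^m}. Let A = (a_{ij}) be any 3×3 matrix over F and let Γ = {[x] ∈ PG(2,q^n) : Σ_{i,j} a_{ij} x_i x_j^{q^m} = 0} be the associated σ-conic. Then every line ℓ of PG(2,q^n) either is contained in Γ or satisfies |ℓ ∩ Γ| ∈ {0, 1, 2, q+1}. -/

import Mathlib

open scoped LinearAlgebra.Projectivization

/-- The line of PG(2,F) determined by a 2-dimensional subspace `W` of `F³`: the set of
projective points whose representative vectors lie in `W`. -/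
def projLine (F : Type*) [Field F] (W : Submodule F (Fin 3 → F)) :
    Set (ℙ F (Fin 3 → F)) :=
  {P : ℙ F (Fin 3 → F) | P.rep ∈ W}

/-- The σ-sesquilinear form Xᵀ A Y^σ on F³ associated with a 3×3 matrix A and
σ : x ↦ x^(q^m). -/
def sForm {F : Type*} [Field F] (q m : ℕ) (A : Matrix (Fin 3) (Fin 3) F)
    (x y : Fin 3 → F) : F :=
  ∑ i : Fin 3, ∑ j : Fin 3, A i j * x i * (y j) ^ (q ^ m)


open Polynomial

lemma exists_kt (n m : ℕ) (hn : 1 ≤ n) (hm : 0 < m) (hmn : Nat.gcd m n = 1) :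
    ∃ k t : ℕ, k * m = 1 + t * n := by
  rcases eq_or_lt_of_le hn with h1 | h2
  · subst h1; exact ⟨1, m - 1, by omega⟩
  · haveI : NeZero n := ⟨by omega⟩
    have hcop : Nat.Coprime m n := hmn
    let u : (ZMod n)ˣ := ZMod.unitOfCoprime m hcop
    set k : ℕ := ((u⁻¹ : (ZMod n)ˣ) : ZMod n).val with hk
    have hmod : ((k * m : ℕ) : ZMod n) = ((1 : ℕ) : ZMod n) := by
      push_cast
      rw [hk, ZMod.natCast_val, ZMod.cast_id]
      have : ((m : ZMod n)) = (u : ZMod n) := (ZMod.coe_unitOfCoprime m hcop).symm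
      rw [this, Units.inv_mul]
    rw [ZMod.natCast_eq_natCast_iff] at hmod
    have h1n : 1 % n = 1 := Nat.mod_eq_of_lt h2
    have hmm : k * m % n = 1 := by
      have := hmod.symm; unfold Nat.ModEq at this; omega
    have h3 : k * m = n * (k * m / n) + 1 := by
      conv_lhs => rw [← Nat.div_add_mod (k * m) n]
      rw [hmm]
    exact ⟨k, k * m / n, h3.trans (by ring)⟩

lemma fix_eq (q n m : ℕ) (hn : 1 ≤ n) (hm : 0 < m) (hmn : Nat.gcd m n = 1)
    (F : Type*) [Field F] [Fintype F] (hF : Fintype.card F = q ^ n) :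
    {x : F | x ^ q ^ m = x} = {x : F | x ^ q = x} := by
  ext x
  simp only [Set.mem_setOf_eq]
  constructor
  · intro hx
    obtain ⟨k, t, hkt⟩ := exists_kt n m hn hm hmn
    have hkm : ∀ j : ℕ, x ^ q ^ (j * m) = x := by
      intro j
      induction j with
      | zero => simp
      | succ j ih =>
        have : (j + 1) * m = j * m + m := by ring
        rw [this, pow_add, pow_mul, ih, hx]
    have h1 := hkm k
    have he : q ^ (k * m) = (q ^ n) ^ t * q := by
      rw [hkt]; ring
    rw [he, pow_mul] at h1
    have h2 : x ^ (q ^ n) ^ t = x := by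
      rw [← hF]; exact FiniteField.pow_card_pow t x
    rwa [h2] at h1
  · intro hx
    have : ∀ j : ℕ, x ^ q ^ j = x := by
      intro j
      induction j with
      | zero => simp
      | succ j ih => rw [pow_succ, pow_mul, ih, hx]
    exact this m

open Polynomial

lemma card_fixq (q n : ℕ) (hq1 : 1 < q) (hn : 1 ≤ n)
    (F : Type*) [Field F] [Fintype F] (hF : Fintype.card F = q ^ n) :
    {x : F | x ^ q = x}.ncard = q := by
  classical
  set P : F[X] := X ^ q - X with hP
  have hP0 : P ≠ 0 := FiniteField.X_pow_card_sub_X_ne_zero F hq1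
  have hdeg : P.natDegree = q := FiniteField.X_pow_card_sub_X_natDegree_eq F hq1
  have hcard1 : 1 < Fintype.card F := Fintype.one_lt_card
  have hbig0 : (X ^ Fintype.card F - X : F[X]) ≠ 0 :=
    FiniteField.X_pow_card_sub_X_ne_zero F hcard1
  -- divisibility
  have hdvd : P ∣ (X ^ Fintype.card F - X : F[X]) := by
    rw [hF]
    obtain ⟨s, hs⟩ : (q - 1) ∣ (q ^ n - 1) := by
      have := Nat.sub_dvd_pow_sub_pow q 1 n
      simpa using this
    have h2 : (X ^ (q - 1) - 1 : F[X]) ∣ X ^ (q ^ n - 1) - 1 := by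
      have h3 := sub_dvd_pow_sub_pow (X ^ (q - 1) : F[X]) 1 s
      rwa [one_pow, ← pow_mul, ← hs] at h3
    have e1 : q - 1 + 1 = q := by omega
    have e2 : q ^ n - 1 + 1 = q ^ n := by
      have : 1 ≤ q ^ n := Nat.one_le_pow _ _ (by omega)
      omega
    have f1 : (X ^ q - X : F[X]) = X * (X ^ (q - 1) - 1) := by
      rw [mul_sub, mul_one, ← pow_succ', e1]
    have f2 : (X ^ q ^ n - X : F[X]) = X * (X ^ (q ^ n - 1) - 1) := by
      rw [mul_sub, mul_one, ← pow_succ', e2]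
    rw [hP, f1, f2]
    exact mul_dvd_mul_left X h2
  -- the big polynomial splits
  have hbigsplit : (X ^ Fintype.card F - X : F[X]).Splits := by
    rw [splits_iff_card_roots, FiniteField.roots_X_pow_card_sub_X,
      FiniteField.X_pow_card_sub_X_natDegree_eq F hcard1]
    simpa using rfl
  have hsplit : P.Splits := hbigsplit.of_dvd hbig0 hdvd
  have hroots : P.roots.card = q := by
    rw [splits_iff_card_roots] at hsplit; rw [hsplit, hdeg]
  -- separability / nodup roots
  have hqF : (q : F) = 0 := by
    have h1 : ((q : F)) ^ n = 0 := by
      push_cast [← Nat.cast_pow, ← hF]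
      exact_mod_cast FiniteField.cast_card_eq_zero F
    exact pow_eq_zero_iff (by omega) |>.mp h1
  have hsep : P.Separable := by
    rw [separable_def]
    have hder : derivative P = -1 := by
      rw [hP, derivative_sub, derivative_X, derivative_X_pow, hqF, C_0, zero_mul, zero_sub]
    rw [hder]
    exact isCoprime_one_right.neg_right
  have hnodup : P.roots.Nodup := nodup_roots hsep
  -- assemble
  have hset : {x : F | x ^ q = x} = ↑P.roots.toFinset := by
    ext x
    simp only [Set.mem_setOf_eq, Finset.coe_sort_coe, Multiset.mem_toFinset, Finset.mem_coe]
    rw [mem_roots hP0, IsRoot.def, hP]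
    simp [sub_eq_zero]
  rw [hset, Set.ncard_coe_finset, Multiset.toFinset_card_of_nodup hnodup, hroots]

open scoped LinearAlgebra.Projectivization
open Projectivization

namespace SigmaConicAux

variable {F : Type*} [Field F]

def cross (w z : Fin 2 → F) : F := w 0 * z 1 - w 1 * z 0

def gg (Q : ℕ) (α β γ δ : F) (w : Fin 2 → F) : F :=
  α * w 0 * (w 0) ^ Q + β * w 0 * (w 1) ^ Q + γ * w 1 * (w 0) ^ Q + δ * w 1 * (w 1) ^ Q

def cr (Q : ℕ) (w : Fin 2 → F) : F := w 0 * (w 1) ^ Q - w 1 * (w 0) ^ Q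

lemma vne_iff {w : Fin 2 → F} : w ≠ 0 ↔ (w 0 ≠ 0 ∨ w 1 ≠ 0) := by
  constructor
  · intro h
    by_contra hc
    push_neg at hc
    exact h (funext fun i => by fin_cases i <;> simp [hc.1, hc.2])
  · rintro (h | h) hc <;> simp [hc] at h

lemma parallel {w z : Fin 2 → F} (hw : w ≠ 0) (h : cross w z = 0) :
    ∃ lam : F, z = lam • w := by
  rcases vne_iff.mp hw with h0 | h1
  · refine ⟨z 0 / w 0, funext fun i => ?_⟩
    fin_cases i
    · simp [h0]
    · show z 1 = z 0 / w 0 * w 1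
      field_simp
      unfold cross at h
      linear_combination h
  · refine ⟨z 1 / w 1, funext fun i => ?_⟩
    fin_cases i
    · show z 0 = z 1 / w 1 * w 0
      field_simp
      unfold cross at h
      linear_combination -h
    · simp [h1]

lemma smul_ne_zero'' {V : Type*} [AddCommGroup V] [Module F V]
    {a : F} (ha : a ≠ 0) {w : V} (hw : w ≠ 0) : a • w ≠ 0 :=
  smul_ne_zero ha hw

lemma smul_ne_zero' {a : F} (ha : a ≠ 0) {w : Fin 2 → F} (hw : w ≠ 0) : a • w ≠ 0 :=
  smul_ne_zero'' ha hw

lemma mk_eq_of_cross {w z : Fin 2 → F} (hw : w ≠ 0) (hz : z ≠ 0) (h : cross w z = 0) :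
    Projectivization.mk F w hw = Projectivization.mk F z hz := by
  obtain ⟨lam, rfl⟩ := parallel hw h
  have hlam : lam ≠ 0 := by
    intro h0; subst h0; simp at hz
  symm
  rw [mk_eq_mk_iff]
  exact ⟨Units.mk0 lam hlam, by simp [Units.smul_def]⟩

lemma exists_rep_smul {V : Type*} [AddCommGroup V] [Module F V] (w : V) (hw : w ≠ 0) :
    ∃ a : F, a ≠ 0 ∧ (Projectivization.mk F w hw).rep = a • w := by
  have h := Projectivization.mk_rep (Projectivization.mk F w hw)
  rw [mk_eq_mk_iff] at h
  obtain ⟨a, ha⟩ := h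
  exact ⟨(a : F), a.ne_zero, ha.symm⟩

lemma gg_smul (Q : ℕ) (α β γ δ : F) (a : F) (w : Fin 2 → F) :
    gg Q α β γ δ (a • w) = a ^ (Q + 1) * gg Q α β γ δ w := by
  simp only [gg, Pi.smul_apply, smul_eq_mul, mul_pow, pow_succ]
  ring

lemma cr_smul (Q : ℕ) (a : F) (w : Fin 2 → F) :
    cr Q (a • w) = a ^ (Q + 1) * cr Q w := by
  simp only [cr, Pi.smul_apply, smul_eq_mul, mul_pow, pow_succ]
  ring

lemma mem_gg_iff (Q : ℕ) (α β γ δ : F) (w : Fin 2 → F) (hw : w ≠ 0) :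
    gg Q α β γ δ (Projectivization.mk F w hw).rep = 0 ↔ gg Q α β γ δ w = 0 := by
  obtain ⟨a, ha, hrep⟩ := exists_rep_smul (F := F) (V := Fin 2 → F) w hw
  rw [hrep, gg_smul]
  simp [pow_ne_zero _ ha, ha]

lemma mem_cr_iff (Q : ℕ) (w : Fin 2 → F) (hw : w ≠ 0) :
    cr Q (Projectivization.mk F w hw).rep = 0 ↔ cr Q w = 0 := by
  obtain ⟨a, ha, hrep⟩ := exists_rep_smul (F := F) (V := Fin 2 → F) w hw
  rw [hrep, cr_smul]
  simp [pow_ne_zero _ ha, ha]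

lemma indep_coeffs {u v : Fin 2 → F} (h : cross u v ≠ 0) {a b : F}
    (hab : a • u + b • v = 0) : a = 0 ∧ b = 0 := by
  have h0 := congrFun hab 0
  have h1 := congrFun hab 1
  simp only [Pi.add_apply, Pi.smul_apply, smul_eq_mul, Pi.zero_apply] at h0 h1
  unfold cross at h
  constructor
  · by_contra ha
    apply h
    have : a * (u 0 * v 1 - u 1 * v 0) = 0 := by linear_combination v 1 * h0 - v 0 * h1
    rcases mul_eq_zero.mp this with h' | h'
    · exact absurd h' ha
    · exact h'
  · by_contra hb
    apply h
    have : b * (u 0 * v 1 - u 1 * v 0) = 0 := by linear_combination -(u 1 * h0) + u 0 * h1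
    rcases mul_eq_zero.mp this with h' | h'
    · exact absurd h' hb
    · exact h'

variable [Fintype F]

instance : Finite (ℙ F (Fin 2 → F)) :=
  inferInstanceAs (Finite (Quotient (projectivizationSetoid F (Fin 2 → F))))

/-- Counting the standard set {[z] : z₀ z₁^Q = z₁ z₀^Q}. -/
lemma card_SL0 (Q : ℕ) (hQ : 0 < Q) (qq : ℕ)
    (hfix : {x : F | x ^ Q = x}.ncard = qq) :
    {P : ℙ F (Fin 2 → F) | cr Q P.rep = 0}.ncard = qq + 1 := by
  classical
  have h01 : (![0, 1] : Fin 2 → F) ≠ 0 := by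
    intro h; have := congrFun h 1; simp at this
  have h1c : ∀ c : F, (![1, c] : Fin 2 → F) ≠ 0 := by
    intro c h; have := congrFun h 0; simp at this
  set p0 : ℙ F (Fin 2 → F) := Projectivization.mk F ![0, 1] h01 with hp0
  set e : F → ℙ F (Fin 2 → F) := fun c => Projectivization.mk F ![1, c] (h1c c) with he
  have hSL0 : {P : ℙ F (Fin 2 → F) | cr Q P.rep = 0}
      = insert p0 (e '' {x : F | x ^ Q = x}) := by
    ext P
    simp only [Set.mem_setOf_eq, Set.mem_insert_iff, Set.mem_image]
    constructor
    · intro hP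
      have hrep := P.rep_nonzero
      rw [show P = Projectivization.mk F P.rep P.rep_nonzero from (Projectivization.mk_rep P).symm]
        at hP ⊢
      rw [mem_cr_iff] at hP
      by_cases h0 : P.rep 0 = 0
      · left
        apply mk_eq_of_cross
        simp [cross, h0]
      · right
        refine ⟨P.rep 1 / P.rep 0, ?_, ?_⟩
        · unfold cr at hP
          rw [div_pow, div_eq_div_iff (pow_ne_zero _ h0) h0]
          linear_combination hP
        · apply mk_eq_of_cross
          simp only [cross]
          simp only [Matrix.cons_val_one, Matrix.head_cons, Matrix.cons_val_zero]
          field_simp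
          ring
    · rintro (rfl | ⟨c, hc, rfl⟩)
      · rw [hp0, show (Projectivization.mk F ![0,1] h01) = Projectivization.mk F ![0,1] h01 from rfl]
        rw [mem_cr_iff]
        simp [cr, zero_pow (by omega : Q ≠ 0)]
      · rw [he]
        simp only []
        rw [mem_cr_iff]
        simp only [cr, Matrix.cons_val_one, Matrix.head_cons, Matrix.cons_val_zero]
        simp [hc, Set.mem_setOf_eq.mp hc]
  rw [hSL0]
  have hnotmem : p0 ∉ e '' {x : F | x ^ Q = x} := by
    rintro ⟨c, _, hc⟩
    rw [he, hp0, mk_eq_mk_iff] at hc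
    obtain ⟨a, ha⟩ := hc
    have := congrFun ha 0
    simp [Units.smul_def] at this
  have heinj : Function.Injective e := by
    intro c c' hcc
    rw [he] at hcc
    simp only [mk_eq_mk_iff] at hcc
    obtain ⟨a, ha⟩ := hcc
    have h0 := congrFun ha 0
    have h1 := congrFun ha 1
    simp [Units.smul_def] at h0 h1
    rw [h0] at h1
    simpa using h1.symm
  rw [Set.ncard_insert_of_notMem hnotmem (Set.toFinite _),
    Set.ncard_image_of_injective _ heinj, hfix]


lemma subset_pair_of_det_eq_zero (Q : ℕ) (hQ : 0 < Q) (α β γ δ : F)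
    (hne : ¬(α = 0 ∧ β = 0 ∧ γ = 0 ∧ δ = 0)) (hdet : α * δ - β * γ = 0)
    (hsurj : Function.Surjective (fun x : F => x ^ Q)) :
    ∃ p1 p2 : ℙ F (Fin 2 → F),
      {P : ℙ F (Fin 2 → F) | gg Q α β γ δ P.rep = 0} ⊆ {p1, p2} := by
  classical
  have hQ0 : ∀ x : F, x ^ Q = 0 → x = 0 := fun x hx => pow_eq_zero_iff (by omega) |>.mp hx
  by_cases hαγ : α = 0 ∧ γ = 0
  · obtain ⟨rfl, rfl⟩ := hαγ
    have hβδ : ¬(β = 0 ∧ δ = 0) := fun ⟨h1, h2⟩ => hne ⟨rfl, h1, rfl, h2⟩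
    have h10 : (![1, 0] : Fin 2 → F) ≠ 0 := by
      intro h; have := congrFun h 0; simp at this
    have hδβ : (![δ, -β] : Fin 2 → F) ≠ 0 := by
      intro h
      have h0 := congrFun h 0; have h1 := congrFun h 1
      simp at h0 h1
      exact hβδ ⟨h1, h0⟩
    refine ⟨Projectivization.mk F ![1, 0] h10, Projectivization.mk F ![δ, -β] hδβ, ?_⟩
    intro P hP
    simp only [Set.mem_setOf_eq] at hP
    set w := P.rep with hw
    have hwne : w ≠ 0 := P.rep_nonzero
    have hfact : (w 1) ^ Q * (β * w 0 + δ * w 1) = 0 := by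
      unfold gg at hP; linear_combination hP
    simp only [Set.mem_insert_iff, Set.mem_singleton_iff]
    rcases mul_eq_zero.mp hfact with h | h
    · left
      rw [show P = Projectivization.mk F w hwne from (Projectivization.mk_rep P).symm]
      apply mk_eq_of_cross
      have h1 : w 1 = 0 := hQ0 _ h
      simp [cross, h1]
    · right
      rw [show P = Projectivization.mk F w hwne from (Projectivization.mk_rep P).symm]
      apply mk_eq_of_cross
      simp only [cross, Matrix.cons_val_one, Matrix.head_cons, Matrix.cons_val_zero]
      linear_combination -h
  · -- (α, γ) ≠ 0 ; write (β, δ) = μ • (α, γ)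
    have hμ : ∃ μ : F, β = μ * α ∧ δ = μ * γ := by
      by_cases hα : α = 0
      · have hγ : γ ≠ 0 := fun h => hαγ ⟨hα, h⟩
        refine ⟨δ / γ, ?_, by field_simp⟩
        have : β * γ = 0 := by rw [hα] at hdet; linear_combination -hdet
        rcases mul_eq_zero.mp this with h | h
        · rw [h, hα]; ring
        · exact absurd h hγ
      · refine ⟨β / α, by field_simp, ?_⟩
        field_simp
        linear_combination hdet
    obtain ⟨μ, rfl, rfl⟩ := hμ
    -- p1 : solution of w0^Q + μ w1^Q = 0 ; p2 : solution of α w0 + γ w1 = 0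
    obtain ⟨ν, hν⟩ := hsurj (-μ)
    simp only [] at hν
    have hν1 : (![ν, 1] : Fin 2 → F) ≠ 0 := by
      intro h; have := congrFun h 1; simp at this
    have hγα : (![γ, -α] : Fin 2 → F) ≠ 0 := by
      intro h
      have h0 := congrFun h 0; have h1 := congrFun h 1
      simp at h0 h1
      exact hαγ ⟨h1, h0⟩
    refine ⟨Projectivization.mk F ![ν, 1] hν1, Projectivization.mk F ![γ, -α] hγα, ?_⟩
    intro P hP
    simp only [Set.mem_setOf_eq] at hP
    set w := P.rep with hw
    have hwne : w ≠ 0 := P.rep_nonzero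
    have hfact : ((w 0) ^ Q + μ * (w 1) ^ Q) * (α * w 0 + γ * w 1) = 0 := by
      unfold gg at hP; linear_combination hP
    simp only [Set.mem_insert_iff, Set.mem_singleton_iff]
    rcases mul_eq_zero.mp hfact with h | h
    · left
      rw [show P = Projectivization.mk F w hwne from (Projectivization.mk_rep P).symm]
      apply mk_eq_of_cross
      have hw0 : w 0 = ν * w 1 := by
        have : (w 0) ^ Q = (ν * w 1) ^ Q := by
          rw [mul_pow, hν]; linear_combination h
        have hinj : Function.Injective (fun x : F => x ^ Q) :=
          Finite.injective_iff_surjective.mpr hsurj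
        exact hinj this
      simp only [cross, Matrix.cons_val_one, Matrix.head_cons, Matrix.cons_val_zero]
      rw [hw0]; ring
    · right
      rw [show P = Projectivization.mk F w hwne from (Projectivization.mk_rep P).symm]
      apply mk_eq_of_cross
      simp only [cross, Matrix.cons_val_one, Matrix.head_cons, Matrix.cons_val_zero]
      linear_combination -h


lemma card_eq_fix_succ_of_det_ne_zero (Q : ℕ) (hQ : 0 < Q) (α β γ δ : F)
    (hdet : α * δ - β * γ ≠ 0)
    (hQadd : ∀ x y : F, (x + y) ^ Q = x ^ Q + y ^ Q)
    (h3 : ¬ {P : ℙ F (Fin 2 → F) | gg Q α β γ δ P.rep = 0}.ncard ≤ 2) :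
    {P : ℙ F (Fin 2 → F) | gg Q α β γ δ P.rep = 0}.ncard
      = {P : ℙ F (Fin 2 → F) | cr Q P.rep = 0}.ncard := by
  classical
  have hQ0 : ∀ x : F, x ^ Q = 0 → x = 0 := fun x hx => pow_eq_zero_iff (by omega) |>.mp hx
  set SL := {P : ℙ F (Fin 2 → F) | gg Q α β γ δ P.rep = 0} with hSL
  have h3' : 3 ≤ SL.ncard := by omega
  obtain ⟨t, hts, ht3⟩ := Set.exists_subset_card_eq h3'
  obtain ⟨P1, P2, P3, h12, h13, h23, rfl⟩ := Set.ncard_eq_three.mp ht3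
  have hP1 : gg Q α β γ δ P1.rep = 0 := hts (by simp)
  have hP2 : gg Q α β γ δ P2.rep = 0 := hts (by simp)
  have hP3 : gg Q α β γ δ P3.rep = 0 := hts (by simp)
  set w1 := P1.rep with hw1
  set w2 := P2.rep with hw2
  set w3 := P3.rep with hw3
  have hw1ne : w1 ≠ 0 := P1.rep_nonzero
  have hw2ne : w2 ≠ 0 := P2.rep_nonzero
  have hw3ne : w3 ≠ 0 := P3.rep_nonzero
  have hcross : ∀ (Pa Pb : ℙ F (Fin 2 → F)), Pa ≠ Pb → cross Pa.rep Pb.rep ≠ 0 := by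
    intro Pa Pb hab h
    apply hab
    rw [← Projectivization.mk_rep Pa, ← Projectivization.mk_rep Pb]
    exact mk_eq_of_cross _ _ h
  have hc12 : cross w1 w2 ≠ 0 := hcross _ _ h12
  have hc32 : cross w3 w2 ≠ 0 := hcross _ _ (fun h => h23 h.symm)
  have hc13 : cross w1 w3 ≠ 0 := hcross _ _ h13
  -- the semilinear map
  set Nσ : (Fin 2 → F) → (Fin 2 → F) :=
    fun w => ![γ * (w 0) ^ Q + δ * (w 1) ^ Q, -(α * (w 0) ^ Q) - β * (w 1) ^ Q] with hNσ
  have hNcross : ∀ w : Fin 2 → F, cross w (Nσ w) = -(gg Q α β γ δ w) := by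
    intro w
    simp only [hNσ, cross, gg, Matrix.cons_val_zero, Matrix.cons_val_one, Matrix.head_cons]
    ring
  have hNne : ∀ w : Fin 2 → F, w ≠ 0 → Nσ w ≠ 0 := by
    intro w hw hN
    have h0 := congrFun hN 0
    have h1 := congrFun hN 1
    simp only [hNσ, Matrix.cons_val_zero, Matrix.cons_val_one, Matrix.head_cons,
      Pi.zero_apply] at h0 h1
    have ha : (α * δ - β * γ) * (w 0) ^ Q = 0 := by linear_combination (-δ) * h1 - β * h0
    have hb : (α * δ - β * γ) * (w 1) ^ Q = 0 := by linear_combination α * h0 + γ * h1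
    have ha' : w 0 = 0 := hQ0 _ ((mul_eq_zero.mp ha).resolve_left hdet)
    have hb' : w 1 = 0 := hQ0 _ ((mul_eq_zero.mp hb).resolve_left hdet)
    exact (vne_iff.mp hw).elim (fun h => h ha') (fun h => h hb')
  have heig : ∀ (w : Fin 2 → F), w ≠ 0 → gg Q α β γ δ w = 0 →
      ∃ lam : F, lam ≠ 0 ∧ Nσ w = lam • w := by
    intro w hw hgg
    obtain ⟨lam, hlam⟩ := parallel hw (by rw [hNcross, hgg, neg_zero])
    refine ⟨lam, ?_, hlam⟩
    intro h0
    rw [h0, zero_smul] at hlam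
    exact hNne w hw hlam
  obtain ⟨lam1, hlam1ne, hlam1⟩ := heig w1 hw1ne hP1
  obtain ⟨lam2, hlam2ne, hlam2⟩ := heig w2 hw2ne hP2
  obtain ⟨lam3, hlam3ne, hlam3⟩ := heig w3 hw3ne hP3
  -- decompose w3 in terms of w1 and w2
  set d : F := cross w1 w2 with hd
  set c1 : F := cross w3 w2 / d with hc1def
  set c2 : F := cross w1 w3 / d with hc2def
  have hc1ne : c1 ≠ 0 := div_ne_zero hc32 hc12
  have hc2ne : c2 ≠ 0 := div_ne_zero hc13 hc12
  set u1 : Fin 2 → F := c1 • w1 with hu1def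
  set u2 : Fin 2 → F := c2 • w2 with hu2def
  have hu1ne : u1 ≠ 0 := smul_ne_zero' hc1ne hw1ne
  have hu2ne : u2 ≠ 0 := smul_ne_zero' hc2ne hw2ne
  have hdecomp : w3 = u1 + u2 := by
    funext i
    simp only [hu1def, hu2def, hc1def, hc2def, Pi.add_apply, Pi.smul_apply, smul_eq_mul]
    rw [div_mul_eq_mul_div, div_mul_eq_mul_div, ← add_div, eq_div_iff hc12]
    simp only [hd, cross]
    fin_cases i <;> simp only [Fin.zero_eta, Fin.mk_one] <;> ring
  have hNsmul : ∀ (c : F) (w : Fin 2 → F), Nσ (c • w) = c ^ Q • Nσ w := by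
    intro c w
    funext i
    fin_cases i <;>
      simp only [hNσ, Pi.smul_apply, smul_eq_mul, Fin.zero_eta, Fin.mk_one, Matrix.cons_val_zero,
        Matrix.cons_val_one, Matrix.head_cons, mul_pow, Fin.isValue] <;> ring
  have hNadd : ∀ w z : Fin 2 → F, Nσ (w + z) = Nσ w + Nσ z := by
    intro w z
    funext i
    fin_cases i <;>
      simp only [hNσ, Pi.add_apply, Fin.zero_eta, Fin.mk_one, Matrix.cons_val_zero,
        Matrix.cons_val_one, Matrix.head_cons, hQadd, Fin.isValue] <;> ring
  -- common eigenvalue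
  set mu1 : F := c1 ^ Q * lam1 / c1 with hmu1def
  set mu2 : F := c2 ^ Q * lam2 / c2 with hmu2def
  have hmu1ne : mu1 ≠ 0 := div_ne_zero (mul_ne_zero (pow_ne_zero _ hc1ne) hlam1ne) hc1ne
  have hmu2ne : mu2 ≠ 0 := div_ne_zero (mul_ne_zero (pow_ne_zero _ hc2ne) hlam2ne) hc2ne
  have hNu1 : Nσ u1 = mu1 • u1 := by
    rw [hu1def, hNsmul, hlam1, smul_smul, smul_smul]
    congr 1
    rw [hmu1def]
    field_simp
  have hNu2 : Nσ u2 = mu2 • u2 := by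
    rw [hu2def, hNsmul, hlam2, smul_smul, smul_smul]
    congr 1
    rw [hmu2def]
    field_simp
  have hcu : cross u1 u2 ≠ 0 := by
    have : cross u1 u2 = c1 * c2 * cross w1 w2 := by
      simp only [hu1def, hu2def, cross, Pi.smul_apply, smul_eq_mul]
      ring
    rw [this]
    exact mul_ne_zero (mul_ne_zero hc1ne hc2ne) hc12
  have heq : (mu1 - lam3) • u1 + (mu2 - lam3) • u2 = 0 := by
    have e1 : mu1 • u1 + mu2 • u2 = lam3 • u1 + lam3 • u2 := by
      rw [← hNu1, ← hNu2, ← hNadd, ← hdecomp, hlam3, hdecomp, smul_add]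
    calc (mu1 - lam3) • u1 + (mu2 - lam3) • u2
        = (mu1 • u1 + mu2 • u2) - (lam3 • u1 + lam3 • u2) := by module
      _ = 0 := sub_eq_zero.mpr e1
  obtain ⟨he1, he2⟩ := indep_coeffs hcu heq
  have hmu1eq : mu1 = lam3 := sub_eq_zero.mp he1
  have hmu2eq : mu2 = lam3 := sub_eq_zero.mp he2
  rw [hmu1eq] at hNu1
  rw [hmu2eq] at hNu2
  -- the linear change of coordinates
  obtain ⟨G, hGdef⟩ : ∃ G : (Fin 2 → F) →ₗ[F] (Fin 2 → F),
      ∀ z, G z = z 0 • u1 + z 1 • u2 := by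
    refine ⟨{ toFun := fun z => z 0 • u1 + z 1 • u2, map_add' := ?_, map_smul' := ?_ },
      fun z => rfl⟩
    · intro x y
      simp only [Pi.add_apply]
      module
    · intro c x
      simp only [Pi.smul_apply, smul_eq_mul, RingHom.id_apply]
      module
  have hGinj : Function.Injective G := by
    intro z z' h
    have hdiff : (z 0 - z' 0) • u1 + (z 1 - z' 1) • u2 = 0 := by
      calc (z 0 - z' 0) • u1 + (z 1 - z' 1) • u2
          = (z 0 • u1 + z 1 • u2) - (z' 0 • u1 + z' 1 • u2) := by module
        _ = G z - G z' := by rw [hGdef, hGdef]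
        _ = 0 := by rw [h, sub_self]
    obtain ⟨e0, e1⟩ := indep_coeffs hcu hdiff
    funext i
    fin_cases i
    · exact sub_eq_zero.mp e0
    · exact sub_eq_zero.mp e1
  have hGsurj : Function.Surjective G := Finite.injective_iff_surjective.mp hGinj
  have hGne : ∀ z : Fin 2 → F, z ≠ 0 → G z ≠ 0 := by
    intro z hz h
    exact hz (hGinj (h.trans (map_zero G).symm))
  -- key equivalence
  have hkey : ∀ z : Fin 2 → F, (gg Q α β γ δ (G z) = 0 ↔ cr Q z = 0) := by
    intro z
    have hNG : Nσ (G z) = lam3 • G ![z 0 ^ Q, z 1 ^ Q] := by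
      rw [hGdef, hGdef, hNadd, hNsmul (z 0) u1, hNsmul (z 1) u2, hNu1, hNu2]
      simp only [Matrix.cons_val_zero, Matrix.cons_val_one, Matrix.head_cons]
      module
    have hcrossG : cross (G z) (Nσ (G z))
        = lam3 * (cross u1 u2 * cr Q z) := by
      rw [hNG, hGdef, hGdef]
      simp only [cross, cr, Pi.add_apply, Pi.smul_apply, smul_eq_mul,
        Matrix.cons_val_zero, Matrix.cons_val_one, Matrix.head_cons]
      ring
    have h1 : gg Q α β γ δ (G z) = -(lam3 * (cross u1 u2 * cr Q z)) := by
      rw [← hcrossG, hNcross, neg_neg]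
    rw [h1]
    constructor
    · intro h
      have := neg_eq_zero.mp h
      rcases mul_eq_zero.mp this with h' | h'
      · exact absurd h' hlam3ne
      · rcases mul_eq_zero.mp h' with h'' | h''
        · exact absurd h'' hcu
        · exact h''
    · intro h
      rw [h, mul_zero, mul_zero, neg_zero]
  -- SL is the image of the standard set
  have himage : SL = (Projectivization.map G hGinj) ''
      {P : ℙ F (Fin 2 → F) | cr Q P.rep = 0} := by
    ext P
    simp only [hSL, Set.mem_setOf_eq, Set.mem_image]
    constructor
    · intro hP
      obtain ⟨z, hz⟩ := hGsurj P.rep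
      have hzne : z ≠ 0 := by
        intro h; rw [h, map_zero] at hz; exact P.rep_nonzero hz.symm
      have hcrz : cr Q z = 0 := (hkey z).mp (by rw [hz]; exact hP)
      refine ⟨Projectivization.mk F z hzne, ?_, ?_⟩
      · exact (mem_cr_iff Q z hzne).mpr hcrz
      · rw [Projectivization.map_mk]
        rw [← Projectivization.mk_rep P]
        apply mk_eq_of_cross
        rw [hz]
        simp only [cross]
        ring
    · rintro ⟨P0, hP0, rfl⟩
      have hz := P0.rep_nonzero
      have hmap : Projectivization.map G hGinj P0
          = Projectivization.mk F (G P0.rep) (hGne _ P0.rep_nonzero) := by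
        conv_lhs => rw [← Projectivization.mk_rep P0]
        rw [Projectivization.map_mk]
      rw [hmap, mem_gg_iff]
      exact (hkey P0.rep).mpr hP0
  rw [himage, Set.ncard_image_of_injective _ (Projectivization.map_injective G hGinj)]


theorem count2 (q : ℕ) (hq : 1 < q) (Q : ℕ) (hQ : 0 < Q)
    (hQadd : ∀ x y : F, (x + y) ^ Q = x ^ Q + y ^ Q)
    (hfix : {x : F | x ^ Q = x}.ncard = q)
    (α β γ δ : F) (hne : ¬(α = 0 ∧ β = 0 ∧ γ = 0 ∧ δ = 0)) :
    {P : ℙ F (Fin 2 → F) | gg Q α β γ δ P.rep = 0}.ncard ∈ ({0, 1, 2, q + 1} : Set ℕ) := by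
  classical
  have hQ0 : ∀ x : F, x ^ Q = 0 → x = 0 := fun x hx => pow_eq_zero_iff (by omega) |>.mp hx
  have hneg : ∀ y : F, (-y) ^ Q = -(y ^ Q) := by
    intro y
    have h := hQadd y (-y)
    rw [add_neg_cancel, zero_pow (by omega : Q ≠ 0)] at h
    linear_combination -h
  have hinj : Function.Injective (fun x : F => x ^ Q) := by
    intro x y h
    simp only [] at h
    have h2 : (x - y) ^ Q = 0 := by
      rw [sub_eq_add_neg, hQadd, hneg, h]
      ring
    exact sub_eq_zero.mp (hQ0 _ h2)
  have hsurj : Function.Surjective (fun x : F => x ^ Q) :=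
    Finite.injective_iff_surjective.mp hinj
  by_cases hdet : α * δ - β * γ = 0
  · obtain ⟨p1, p2, hsub⟩ := subset_pair_of_det_eq_zero Q hQ α β γ δ hne hdet hsurj
    have hle : {P : ℙ F (Fin 2 → F) | gg Q α β γ δ P.rep = 0}.ncard ≤ 2 := by
      calc {P : ℙ F (Fin 2 → F) | gg Q α β γ δ P.rep = 0}.ncard
          ≤ ({p1, p2} : Set (ℙ F (Fin 2 → F))).ncard :=
            Set.ncard_le_ncard hsub (Set.toFinite _)
        _ ≤ 2 := by
            apply le_trans (Set.ncard_insert_le p1 {p2})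
            simp
    simp only [Set.mem_insert_iff, Set.mem_singleton_iff]
    omega
  · by_cases hle : {P : ℙ F (Fin 2 → F) | gg Q α β γ δ P.rep = 0}.ncard ≤ 2
    · simp only [Set.mem_insert_iff, Set.mem_singleton_iff]
      omega
    · rw [card_eq_fix_succ_of_det_ne_zero Q hQ α β γ δ hdet hQadd hle,
        card_SL0 Q hQ q hfix]
      simp

end SigmaConicAux

open SigmaConicAux Projectivization

/-- Every line of PG(2,qⁿ) either is contained in the σ-conic Γ associated
with a 3×3 matrix A, or meets it in 0, 1, 2 or q+1 points. -/
theorem line_meets_sigma_conic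
    (q n m : ℕ) (hq : IsPrimePow q) (hn : 1 ≤ n) (hm : 0 < m)
    (hmn : Nat.gcd m n = 1)
    (F : Type*) [Field F] [Fintype F] (hF : Fintype.card F = q ^ n)
    (A : Matrix (Fin 3) (Fin 3) F)
    (Γ : Set (ℙ F (Fin 3 → F)))
    (hΓ : Γ = {P : ℙ F (Fin 3 → F) | sForm q m A P.rep P.rep = 0})
    (W : Submodule F (Fin 3 → F)) (hW : Module.finrank F ↥W = 2) :
    projLine F W ⊆ Γ ∨ (projLine F W ∩ Γ).ncard ∈ ({0, 1, 2, q + 1} : Set ℕ) := by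
  classical
  have hq1 : 1 < q := hq.two_le
  set Q : ℕ := q ^ m with hQdef
  have hQ : 0 < Q := pow_pos (by omega) m
  -- characteristic
  obtain ⟨p, k, hp, hk, hpk⟩ := hq
  have hp' : Nat.Prime p := Nat.prime_iff.mpr hp
  haveI : Fact p.Prime := ⟨hp'⟩
  have hcharF : CharP F p := by
    obtain ⟨p', hchar⟩ := CharP.exists F
    haveI := hchar
    obtain ⟨d, hp'', hcard⟩ := FiniteField.card F p'
    have hdvd : p' ∣ p ^ (k * n) := by
      rw [pow_mul, hpk, ← hF, hcard]
      exact dvd_pow_self p' (by positivity)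
    have : p' = p := (Nat.prime_dvd_prime_iff_eq hp'' hp').mp (hp''.dvd_of_dvd_pow hdvd)
    rwa [this] at hchar
  haveI := hcharF
  have hQadd : ∀ x y : F, (x + y) ^ Q = x ^ Q + y ^ Q := by
    intro x y
    rw [hQdef, ← hpk, ← pow_mul]
    exact add_pow_char_pow x y p (k * m)
  have hfix : {x : F | x ^ Q = x}.ncard = q := by
    rw [hQdef, fix_eq q n m hn hm hmn F hF]
    exact card_fixq q n hq1 hn F hF
  -- basis of W
  haveI : Module.Finite F ↥W := inferInstance
  let b : Module.Basis (Fin 2) F ↥W := Module.finBasisOfFinrankEq F ↥W hW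
  set u : Fin 3 → F := (b 0 : Fin 3 → F) with hu
  set v : Fin 3 → F := (b 1 : Fin 3 → F) with hv
  set f : (Fin 2 → F) →ₗ[F] (Fin 3 → F) :=
    W.subtype.comp (b.equivFun.symm : (Fin 2 → F) ≃ₗ[F] ↥W).toLinearMap with hfdef
  have hfapp : ∀ z : Fin 2 → F, f z = z 0 • u + z 1 • v := by
    intro z
    rw [hfdef]
    simp only [LinearMap.comp_apply, LinearEquiv.coe_coe, Module.Basis.equivFun_symm_apply,
      Fin.sum_univ_two, Submodule.coe_subtype, Submodule.coe_add, SetLike.val_smul]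
    rfl
  have hfinj : Function.Injective f := by
    rw [hfdef]
    exact W.injective_subtype.comp b.equivFun.symm.injective
  have hfmem : ∀ z : Fin 2 → F, f z ∈ W := by
    intro z
    rw [hfdef]
    exact (b.equivFun.symm z).2
  have hfsurj : ∀ x : Fin 3 → F, x ∈ W → ∃ z : Fin 2 → F, f z = x := by
    intro x hx
    refine ⟨b.equivFun ⟨x, hx⟩, ?_⟩
    rw [hfdef]
    simp only [LinearMap.comp_apply, LinearEquiv.coe_coe, LinearEquiv.symm_apply_apply,
      Submodule.coe_subtype]
  -- coefficients
  set al : F := sForm q m A u u with hal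
  set be : F := sForm q m A u v with hbe
  set ga : F := sForm q m A v u with hga
  set de : F := sForm q m A v v with hde
  -- expansion of the form on W
  have hkey : ∀ z : Fin 2 → F, sForm q m A (f z) (f z) = gg Q al be ga de z := by
    intro z
    have hsummand : ∀ i j : Fin 3,
        A i j * ((f z) i) * (((f z) j) ^ Q)
          = z 0 * z 0 ^ Q * (A i j * u i * (u j) ^ Q)
            + z 0 * z 1 ^ Q * (A i j * u i * (v j) ^ Q)
            + z 1 * z 0 ^ Q * (A i j * v i * (u j) ^ Q)
            + z 1 * z 1 ^ Q * (A i j * v i * (v j) ^ Q) := by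
      intro i j
      rw [hfapp]
      have hexp : ((z 0 • u + z 1 • v) j) ^ Q = z 0 ^ Q * (u j) ^ Q + z 1 ^ Q * (v j) ^ Q := by
        simp only [Pi.add_apply, Pi.smul_apply, smul_eq_mul]
        rw [hQadd, mul_pow, mul_pow]
      rw [hexp]
      simp only [Pi.add_apply, Pi.smul_apply, smul_eq_mul]
      ring
    have : sForm q m A (f z) (f z)
        = z 0 * z 0 ^ Q * al + z 0 * z 1 ^ Q * be + z 1 * z 0 ^ Q * ga + z 1 * z 1 ^ Q * de := by
      rw [show sForm q m A (f z) (f z) = ∑ i : Fin 3, ∑ j : Fin 3,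
        A i j * ((f z) i) * (((f z) j) ^ Q) from rfl]
      simp only [hsummand, Finset.sum_add_distrib, ← Finset.mul_sum]
      rfl
    rw [this]
    simp only [gg]
    ring
  -- scaling invariance of the form
  have hscal : ∀ (c : F) (x : Fin 3 → F),
      sForm q m A (c • x) (c • x) = c ^ (Q + 1) * sForm q m A x x := by
    intro c x
    rw [show sForm q m A (c • x) (c • x) = ∑ i : Fin 3, ∑ j : Fin 3,
      A i j * ((c • x) i) * (((c • x) j) ^ Q) from rfl]
    rw [show sForm q m A x x = ∑ i : Fin 3, ∑ j : Fin 3,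
      A i j * (x i) * ((x j) ^ Q) from rfl]
    rw [Finset.mul_sum]
    apply Finset.sum_congr rfl
    intro i _
    rw [Finset.mul_sum]
    apply Finset.sum_congr rfl
    intro j _
    simp only [Pi.smul_apply, smul_eq_mul, mul_pow, pow_succ]
    ring
  by_cases hzero : al = 0 ∧ be = 0 ∧ ga = 0 ∧ de = 0
  · -- the line is contained in the conic
    left
    intro P hP
    rw [hΓ]
    obtain ⟨z, hz⟩ := hfsurj P.rep hP
    have : sForm q m A P.rep P.rep = 0 := by
      rw [← hz, hkey]
      obtain ⟨h1, h2, h3, h4⟩ := hzero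
      simp [gg, h1, h2, h3, h4]
    exact this
  · right
    set SL : Set (ℙ F (Fin 2 → F)) := {P : ℙ F (Fin 2 → F) | gg Q al be ga de P.rep = 0}
      with hSLdef
    have hψinj := Projectivization.map_injective f hfinj
    have himg : projLine F W ∩ Γ = (Projectivization.map f hfinj) '' SL := by
      ext P
      constructor
      · rintro ⟨hPW, hPΓ⟩
        rw [hΓ, Set.mem_setOf_eq] at hPΓ
        obtain ⟨z, hz⟩ := hfsurj P.rep hPW
        have hzne : z ≠ 0 := by
          intro h
          rw [h, map_zero] at hz
          exact P.rep_nonzero hz.symm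
        have hggz : gg Q al be ga de z = 0 := by
          rw [← hkey, hz]
          exact hPΓ
        refine ⟨Projectivization.mk F z hzne, ?_, ?_⟩
        · exact (mem_gg_iff Q al be ga de z hzne).mpr hggz
        · rw [Projectivization.map_mk]
          rw [← Projectivization.mk_rep P]
          rw [mk_eq_mk_iff]
          exact ⟨1, by simpa using hz.symm⟩
      · rintro ⟨P0, hP0, rfl⟩
        have hz0 := P0.rep_nonzero
        have hggz : gg Q al be ga de P0.rep = 0 := hP0
        have hmap : Projectivization.map f hfinj P0
            = Projectivization.mk F (f P0.rep) (fun h => hz0 (hfinj (h.trans (map_zero f).symm))) := by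
          conv_lhs => rw [← Projectivization.mk_rep P0]
          rw [Projectivization.map_mk]
        rw [hmap]
        obtain ⟨a, ha, hrep⟩ := exists_rep_smul (F := F) (V := Fin 3 → F)
          (f P0.rep) (fun h => hz0 (hfinj (h.trans (map_zero f).symm)))
        constructor
        · show _ ∈ projLine F W
          rw [projLine, Set.mem_setOf_eq, hrep]
          exact W.smul_mem a (hfmem P0.rep)
        · rw [hΓ, Set.mem_setOf_eq, hrep, hscal, hkey, hggz, mul_zero]
    rw [himg, Set.ncard_image_of_injective _ hψinj]
    exact count2 q hq1 Q hQ hQadd hfix al be ga de hzero
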